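/- Let H be a numerical semigroup minimally generated by three elements which is not symmetric. Then tr(H) = C_H if and only if there exists a positive integer a such that H is generated by {3, 3a+1, 3a+2}. -/

import Mathlib

namespace NumSgp

/-- A numerical semigroup: an additive submonoid of ℕ with finite complement. -/
def IsNumSgp (H : Set ℕ) : Prop :=
  0 ∈ H ∧ (∀ a ∈ H, ∀ b ∈ H, a + b ∈ H) ∧ Hᶜ.Finite

/-- Membership of an integer in (the image in ℤ of) `H ⊆ ℕ`. -/
def memZ (H : Set ℕ) (z : ℤ) : Prop := ∃ n ∈ H, (n : ℤ) = z

/-- The Frobenius number: the largest integer not in `H`. -/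
noncomputable def frob (H : Set ℕ) : ℤ := sSup {z : ℤ | ¬ memZ H z}

/-- The pseudo-Frobenius numbers of `H`. -/
def pseudoFrob (H : Set ℕ) : Set ℤ :=
  {f : ℤ | ¬ memZ H f ∧ ∀ m ∈ H, m ≠ 0 → memZ H (f + (m : ℤ))}

/-- The canonical ideal `Ω_H = {-f + h : f ∈ PF(H), h ∈ H}`. -/
def canIdeal (H : Set ℕ) : Set ℤ :=
  {z : ℤ | ∃ f ∈ pseudoFrob H, ∃ h ∈ H, z = -f + (h : ℤ)}

/-- The anti-canonical ideal `Ω_H⁻¹ = {x : x + Ω_H ⊆ H}`. -/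
def antiCanIdeal (H : Set ℕ) : Set ℤ :=
  {x : ℤ | ∀ w ∈ canIdeal H, memZ H (x + w)}

/-- The trace of `H`: the sumset `Ω_H + Ω_H⁻¹`. -/
def trace (H : Set ℕ) : Set ℤ :=
  {z : ℤ | ∃ w ∈ canIdeal H, ∃ x ∈ antiCanIdeal H, z = w + x}

/-- The conductor ideal `C_H = {x : x > Fr(H)}` (viewed inside ℤ). -/
noncomputable def condIdeal (H : Set ℕ) : Set ℤ := {z : ℤ | frob H < z}

/-- The residue of `H`: `|H ∖ tr(H)|`. -/
noncomputable def res (H : Set ℕ) : ℕ :=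
  Set.ncard {h : ℕ | h ∈ H ∧ (h : ℤ) ∉ trace H}

/-- The number of gaps `g(H)`. -/
noncomputable def gaps (H : Set ℕ) : ℕ := Set.ncard Hᶜ

/-- The number of non-gaps below the Frobenius number, `n(H)`. -/
noncomputable def nongaps (H : Set ℕ) : ℕ :=
  Set.ncard {x : ℕ | x ∈ H ∧ (x : ℤ) < frob H}

/-- `H` is symmetric if for all `x ∈ ℤ`, `x ∈ H` or `Fr(H) - x ∈ H`. -/
noncomputable def IsSymmetric (H : Set ℕ) : Prop :=
  ∀ z : ℤ, memZ H z ∨ memZ H (frob H - z)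

/-- `H` is nearly Gorenstein if `M = H ∖ {0} ⊆ tr(H)`. -/
def NearlyGorenstein (H : Set ℕ) : Prop :=
  ∀ h ∈ H, h ≠ 0 → (h : ℤ) ∈ trace H

/-- The submonoid of ℕ generated by a set. -/
def genBy (A : Set ℕ) : Set ℕ := (AddSubmonoid.closure A : Set ℕ)

end NumSgp

open NumSgp

namespace NumSgpAux

lemma memZ_natCast {H : Set ℕ} {n : ℕ} : memZ H (n : ℤ) ↔ n ∈ H := by
  constructor
  · rintro ⟨k, hk, hkz⟩
    have : k = n := by exact_mod_cast hkz
    rwa [this] at hk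
  · intro h; exact ⟨n, h, rfl⟩

lemma memZ_nonneg {H : Set ℕ} {z : ℤ} (h : memZ H z) : 0 ≤ z := by
  rcases h with ⟨n, _, rfl⟩; exact Int.natCast_nonneg n

lemma memZ_elim {H : Set ℕ} {z : ℤ} (h : memZ H z) : ∃ n : ℕ, n ∈ H ∧ (n : ℤ) = z := by
  rcases h with ⟨n, hn, rfl⟩; exact ⟨n, hn, rfl⟩

/-- Closure under addition in `memZ` form. -/
lemma memZ_add {H : Set ℕ} (hadd : ∀ a ∈ H, ∀ b ∈ H, a + b ∈ H) {z : ℤ} {h : ℕ}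
    (hz : memZ H z) (hh : h ∈ H) : memZ H (z + h) := by
  rcases hz with ⟨n, hn, rfl⟩
  exact ⟨n + h, hadd n hn h hh, by push_cast; ring⟩

/-- generators lie in the generated monoid -/
lemma mem_genBy_of_mem {A : Set ℕ} {n : ℕ} (h : n ∈ A) : n ∈ genBy A :=
  AddSubmonoid.subset_closure h

lemma genBy_subset {A H : Set ℕ} (h0 : 0 ∈ H) (hadd : ∀ a ∈ H, ∀ b ∈ H, a + b ∈ H)
    (hA : A ⊆ H) : genBy A ⊆ H := by
  intro x hx
  induction hx using AddSubmonoid.closure_induction with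
  | mem y hy => exact hA hy
  | zero => exact h0
  | add a b _ _ ha hb => exact hadd a ha b hb

lemma mul_mem_genBy {A : Set ℕ} {n : ℕ} (h : n ∈ A) (k : ℕ) : k * n ∈ genBy A := by
  have := AddSubmonoid.nsmul_mem (AddSubmonoid.closure A) (AddSubmonoid.subset_closure h) k
  simpa [nsmul_eq_mul, genBy] using this

lemma add_mem_genBy {A : Set ℕ} {x y : ℕ} (hx : x ∈ genBy A) (hy : y ∈ genBy A) :
    x + y ∈ genBy A := by
  exact AddSubmonoid.add_mem _ hx hy

/-- factorization over three generators -/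
lemma genBy_three_factor {n₁ n₂ n₃ x : ℕ} (hx : x ∈ genBy {n₁, n₂, n₃}) :
    ∃ a₁ a₂ a₃ : ℕ, x = a₁ * n₁ + a₂ * n₂ + a₃ * n₃ := by
  induction hx using AddSubmonoid.closure_induction with
  | mem y hy =>
    rcases hy with h | h | h
    · exact ⟨1, 0, 0, by simp [h]⟩
    · exact ⟨0, 1, 0, by simp [h]⟩
    · exact ⟨0, 0, 1, by simp [Set.mem_singleton_iff.mp h]⟩
  | zero => exact ⟨0, 0, 0, by simp⟩
  | add a b _ _ ha hb =>
    rcases ha with ⟨a₁, a₂, a₃, rfl⟩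
    rcases hb with ⟨b₁, b₂, b₃, rfl⟩
    exact ⟨a₁ + b₁, a₂ + b₂, a₃ + b₃, by ring⟩

lemma genBy_one : genBy {1, 1} = (Set.univ : Set ℕ) := by
  ext n
  simp only [Set.mem_univ, iff_true]
  have : ({1, 1} : Set ℕ) = {1} := by simp
  rw [this]
  have := mul_mem_genBy (A := ({1} : Set ℕ)) rfl n
  simpa using this

end NumSgpAux
namespace NumSgpAux
open NumSgp

/-- Setup of the natural Frobenius number. -/
lemma frob_setup {H : Set ℕ} (hnum : IsNumSgp H) (hne : Hᶜ.Nonempty) :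
    ∃ F₀ : ℕ, F₀ ∉ H ∧ (∀ n : ℕ, n ∉ H → n ≤ F₀) ∧ frob H = (F₀ : ℤ) := by
  obtain ⟨h0, hadd, hfin⟩ := hnum
  have hne' : hfin.toFinset.Nonempty := by simpa [Set.Finite.toFinset_nonempty] using hne
  obtain ⟨F₀, hF₀mem, hmax⟩ : ∃ F₀ : ℕ, F₀ ∉ H ∧ ∀ n : ℕ, n ∉ H → n ≤ F₀ := by
    refine ⟨hfin.toFinset.max' hne', ?_, ?_⟩
    · have := hfin.toFinset.max'_mem hne'
      simpa using this
    · intro n hn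
      exact hfin.toFinset.le_max' n (by simpa using hn)
  refine ⟨F₀, hF₀mem, hmax, ?_⟩
  have : IsGreatest {z : ℤ | ¬ memZ H z} (F₀ : ℤ) := by
    constructor
    · simpa [Set.mem_setOf_eq, memZ_natCast] using hF₀mem
    · intro z hz
      simp only [Set.mem_setOf_eq] at hz
      rcases le_or_gt z 0 with h | h
      · exact le_trans h (Int.natCast_nonneg F₀)
      · have hz' : z.toNat ∉ H := by
          intro hmem
          exact hz ⟨z.toNat, hmem, Int.toNat_of_nonneg h.le⟩
        have := hmax _ hz'
        omega
  exact this.csSup_eq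

lemma compl_nonempty {H : Set ℕ} (hmin : ∀ x y : ℕ, H ≠ genBy {x, y}) : Hᶜ.Nonempty := by
  by_contra hc
  have : H = Set.univ := by
    have h2 := Set.not_nonempty_iff_eq_empty.mp hc
    exact Set.compl_empty_iff.mp h2
  exact hmin 1 1 (by rw [this, genBy_one])

/-- all naturals above F₀ are in H -/
lemma big_mem {H : Set ℕ} (hFmax : ∀ n : ℕ, n ∉ H → n ≤ F₀) {n : ℕ} (h : F₀ < n) : n ∈ H := by
  by_contra hn; exact absurd (hFmax n hn) (by omega)

lemma memZ_of_big {H : Set ℕ} {F₀ : ℕ} (hFmax : ∀ n : ℕ, n ∉ H → n ≤ F₀) {z : ℤ}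
    (h : (F₀ : ℤ) < z) : memZ H z := by
  refine ⟨z.toNat, big_mem hFmax (by omega), by omega⟩

/-- the Frobenius number is pseudo-Frobenius -/
lemma frob_mem_pf {H : Set ℕ} {F₀ : ℕ} (hF : F₀ ∉ H) (hFmax : ∀ n : ℕ, n ∉ H → n ≤ F₀) :
    (F₀ : ℤ) ∈ pseudoFrob H := by
  constructor
  · rw [memZ_natCast]; exact hF
  · intro m hm hm0
    exact memZ_of_big hFmax (by have : 1 ≤ m := Nat.one_le_iff_ne_zero.mpr hm0; push_cast; omega)

/-- pseudo-Frobenius numbers are natural numbers in [1, F₀] -/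
lemma pf_nat {H : Set ℕ} (hnum : IsNumSgp H) {F₀ : ℕ} (hF : F₀ ∉ H)
    (hFmax : ∀ n : ℕ, n ∉ H → n ≤ F₀) {p : ℤ} (hp : p ∈ pseudoFrob H) :
    ∃ p₀ : ℕ, p = (p₀ : ℤ) ∧ p₀ ∉ H ∧ 1 ≤ p₀ ∧ p₀ ≤ F₀ ∧
      (∀ h ∈ H, h ≠ 0 → p₀ + h ∈ H) := by
  obtain ⟨hpnot, hpadd⟩ := hp
  -- p ≥ 0
  have hge : 0 ≤ p := by
    by_contra hneg
    push_neg at hneg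
    -- take h ∈ H with (h:ℤ) = F₀ - p ; then p + h = F₀ ∈ H : contradiction
    have hmem : memZ H ((F₀ : ℤ) - p) := memZ_of_big hFmax (by omega)
    rcases hmem with ⟨n, hn, hnz⟩
    have hn0 : n ≠ 0 := by
      intro h0; rw [h0] at hnz; simp at hnz; omega
    have := hpadd n hn hn0
    rw [hnz] at this
    simp only [add_sub_cancel] at this
    rw [memZ_natCast] at this
    exact hF this
  set p₀ := p.toNat with hp₀
  have hpeq : p = (p₀ : ℤ) := by omega
  have hp₀not : p₀ ∉ H := by
    intro hmem; exact hpnot (by rw [hpeq, memZ_natCast]; exact hmem)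
  have hp₀1 : 1 ≤ p₀ := by
    rcases Nat.eq_zero_or_pos p₀ with h | h
    · exfalso; apply hp₀not; rw [h]; exact hnum.1
    · exact h
  refine ⟨p₀, hpeq, hp₀not, hp₀1, hFmax _ hp₀not, ?_⟩
  intro h hh hh0
  have := hpadd h hh hh0
  rw [hpeq] at this
  rw [show ((p₀ : ℤ) + (h : ℤ)) = ((p₀ + h : ℕ) : ℤ) by push_cast; ring, memZ_natCast] at this
  exact this

/-- From non-symmetry: there is a pseudo-Frobenius number different from F₀. -/
lemma exists_other_pf {H : Set ℕ} (hnum : IsNumSgp H) {F₀ : ℕ} (hF : F₀ ∉ H)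
    (hFmax : ∀ n : ℕ, n ∉ H → n ≤ F₀) (hfr : frob H = (F₀ : ℤ))
    (hns : ¬ IsSymmetric H) :
    ∃ f₀ : ℕ, (f₀ : ℤ) ∈ pseudoFrob H ∧ f₀ < F₀ ∧ f₀ ∉ H ∧ 1 ≤ f₀ := by
  obtain ⟨h0, hadd, _⟩ := hnum
  -- a natural z ∉ H with F₀ - z ∉ H
  have hwit : ∃ z : ℕ, z ≤ F₀ ∧ z ∉ H ∧ (F₀ - z) ∉ H := by
    rw [IsSymmetric] at hns
    push_neg at hns
    obtain ⟨z, hz1, hz2⟩ := hns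
    rw [hfr] at hz2
    have hz0 : 0 ≤ z := by
      by_contra hneg
      exact hz2 (memZ_of_big hFmax (by omega))
    have hzF : z ≤ (F₀ : ℤ) := by
      by_contra hgt
      exact hz1 (memZ_of_big hFmax (by omega))
    refine ⟨z.toNat, by omega, ?_, ?_⟩
    · intro hmem; exact hz1 ⟨z.toNat, hmem, by omega⟩
    · intro hmem; exact hz2 ⟨F₀ - z.toNat, hmem, by push_cast; omega⟩
  -- descending induction on F₀ - z
  have key : ∀ k : ℕ, ∀ z : ℕ, F₀ - z ≤ k → z ≤ F₀ → z ∉ H → (F₀ - z) ∉ H →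
      ∃ f₀ : ℕ, (f₀ : ℤ) ∈ pseudoFrob H ∧ f₀ < F₀ ∧ f₀ ∉ H ∧ 1 ≤ f₀ := by
    intro k
    induction k with
    | zero =>
      intro z hk hzF hz hFz
      -- z = F₀, so F₀ - z = 0 ∈ H, contradiction
      exfalso
      have : F₀ - z = 0 := by omega
      rw [this] at hFz
      exact hFz h0
    | succ k ih =>
      intro z hk hzF hz hFz
      by_cases hcase : ∀ h ∈ H, h ≠ 0 → z + h ∈ H
      · -- z is pseudo-Frobenius
        have hzne : z ≠ F₀ := by
          intro he; rw [he] at hFz; simp at hFz; exact hFz h0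
        have hz1 : 1 ≤ z := by
          rcases Nat.eq_zero_or_pos z with h | h
          · exfalso; apply hz; rw [h]; exact h0
          · exact h
        refine ⟨z, ⟨by rw [memZ_natCast]; exact hz, ?_⟩, by omega, hz, hz1⟩
        intro m hm hm0
        rw [show ((z : ℤ) + (m : ℤ)) = ((z + m : ℕ) : ℤ) by push_cast; ring, memZ_natCast]
        exact hcase m hm hm0
      · push_neg at hcase
        obtain ⟨h, hh, hh0, hzh⟩ := hcase
        have hzhF : z + h ≤ F₀ := hFmax _ hzh
        have h1 : 1 ≤ h := Nat.one_le_iff_ne_zero.mpr hh0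
        have hFzh : (F₀ - (z + h)) ∉ H := by
          intro hmem
          apply hFz
          have : F₀ - z = (F₀ - (z + h)) + h := by omega
          rw [this]
          exact hadd _ hmem _ hh
        exact ih (z + h) (by omega) hzhF hzh hFzh
  obtain ⟨z, h1, h2, h3⟩ := hwit
  exact key (F₀ - z) z le_rfl h1 h2 h3

/-- T1: the key trace-membership construction. -/
lemma mem_trace_of {H : Set ℕ} (hnum : IsNumSgp H) {F₀ : ℕ} (hF : F₀ ∉ H)
    (hFmax : ∀ n : ℕ, n ∉ H → n ≤ F₀) (s : ℤ)
    (hs : ∀ g ∈ pseudoFrob H, memZ H (s + (F₀ : ℤ) - g)) : s ∈ trace H := by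
  refine ⟨-(F₀ : ℤ) + (0 : ℕ), ⟨(F₀ : ℤ), frob_mem_pf hF hFmax, 0, hnum.1, rfl⟩,
    s + (F₀ : ℤ), ?_, by push_cast; ring⟩
  rintro w ⟨g, hg, h, hh, rfl⟩
  have h1 : memZ H (s + (F₀ : ℤ) - g) := hs g hg
  have h2 := memZ_add hnum.2.1 h1 hh
  rw [show s + (F₀ : ℤ) + (-g + (h : ℤ)) = s + (F₀ : ℤ) - g + (h : ℤ) by ring]
  exact h2

end NumSgpAux
namespace NumSgpAux
open NumSgp

/-- CORE combinatorial lemma: an "Apéry-like" predicate `A` on values `x*b+y*c`,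
with unique values per class mod `m`, downward closed, class-surjective, bounded,
cannot have three distinct maximal elements. -/
lemma core_three (m b c B : ℕ) (hb : 1 ≤ b) (hc : 1 ≤ c) (A : ℕ → Prop)
    (hA1 : ∀ v w, A v → A w → v ≡ w [MOD m] → v = w)
    (hA2 : ∀ x y x' y', x' ≤ x → y' ≤ y → A (x * b + y * c) → A (x' * b + y' * c))
    (hA3 : ∀ v : ℕ, ∃ w, A w ∧ w ≡ v [MOD m])
    (hA6 : ∀ v, A v → ∃ x y, v = x * b + y * c)
    (hA7 : ∀ v, A v → v ≤ B)
    (W₁ W₂ W₃ : ℕ) (hW1 : A W₁) (hW2 : A W₂) (hW3 : A W₃)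
    (hm1 : ∀ s t : ℕ, 1 ≤ s + t → ¬ A (W₁ + (s * b + t * c)))
    (hm2 : ∀ s t : ℕ, 1 ≤ s + t → ¬ A (W₂ + (s * b + t * c)))
    (hm3 : ∀ s t : ℕ, 1 ≤ s + t → ¬ A (W₃ + (s * b + t * c)))
    (d12 : W₁ ≠ W₂) (d13 : W₁ ≠ W₃) (d23 : W₂ ≠ W₃) : False := by
  classical
  -- canonical representations
  set P : ℕ → ℕ → Prop := fun v y => ∃ x, v = x * b + y * c with hP
  set Y : ℕ → ℕ := fun v => if h : ∃ y, P v y then Nat.find h else 0 with hYdef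
  set X : ℕ → ℕ := fun v => if h : P v (Y v) then Nat.find h else 0 with hXdef
  have repP : ∀ v, A v → P v (Y v) := by
    intro v hv
    obtain ⟨x, y, hxy⟩ := hA6 v hv
    have hex : ∃ y, P v y := ⟨y, x, hxy⟩
    simp only [hYdef, dif_pos hex]
    exact Nat.find_spec hex
  have repspec : ∀ v, A v → v = X v * b + Y v * c := by
    intro v hv
    have h := repP v hv
    simp only [hXdef, dif_pos h]
    exact Nat.find_spec h
  have Ymin : ∀ v y, P v y → Y v ≤ y := by
    intro v y hy
    have hex : ∃ y', P v y' := ⟨y, hy⟩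
    simp only [hYdef, dif_pos hex]
    exact Nat.find_min' hex hy
  have Xuniq : ∀ v x y, A v → v = x * b + y * c → y = Y v → x = X v := by
    intro v x y hv hval hyy
    have h1 := repspec v hv
    rw [hyy] at hval
    have h2 : x * b = X v * b := by omega
    exact Nat.eq_of_mul_eq_mul_right (by omega) h2
  -- canonical representation predicate
  set R : ℕ → ℕ → Prop := fun x y => A (x * b + y * c) ∧ X (x * b + y * c) = x ∧
      Y (x * b + y * c) = y with hR
  have RofA : ∀ v, A v → R (X v) (Y v) := by
    intro v hv
    have h := repspec v hv
    exact ⟨by rw [← h]; exact hv, by rw [← h], by rw [← h]⟩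
  -- L1 : downward closure of canonical representations
  have L1 : ∀ x y x' y', x' ≤ x → y' ≤ y → R x y → R x' y' := by
    rintro x y x' y' hx' hy' ⟨hA', hX', hY'⟩
    obtain ⟨dx, rfl⟩ := Nat.exists_eq_add_of_le hx'
    obtain ⟨dy, rfl⟩ := Nat.exists_eq_add_of_le hy'
    have hAv' : A (x' * b + y' * c) := hA2 _ _ _ _ (Nat.le_add_right _ _) (Nat.le_add_right _ _) hA'
    have hYeq : Y (x' * b + y' * c) = y' := by
      have hle : Y (x' * b + y' * c) ≤ y' := Ymin _ _ ⟨x', rfl⟩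
      rcases Nat.lt_or_ge (Y (x' * b + y' * c)) y' with hlt | hge
      · exfalso
        obtain ⟨ξ, hξ⟩ := repP _ hAv'
        set yv := Y (x' * b + y' * c) with hyv
        have hPv : P ((x' + dx) * b + (y' + dy) * c) (yv + dy) := by
          refine ⟨ξ + dx, ?_⟩
          rw [show (x' + dx) * b + (y' + dy) * c = (x' * b + y' * c) + (dx * b + dy * c) by ring,
            hξ]
          ring
        have h5 := Ymin _ _ hPv
        omega
      · omega
    have hXeq : X (x' * b + y' * c) = x' :=
      (Xuniq _ _ _ hAv' rfl hYeq.symm).symm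
    exact ⟨hAv', hXeq, hYeq⟩
  -- incomparability of maximal elements
  have incomp : ∀ V W : ℕ, A V → A W → V ≠ W →
      (∀ s t : ℕ, 1 ≤ s + t → ¬ A (V + (s * b + t * c))) →
      ¬ (X V ≤ X W ∧ Y V ≤ Y W) := by
    rintro V W hV hW hne hmax ⟨hxle, hyle⟩
    obtain ⟨dx, hdx⟩ := Nat.exists_eq_add_of_le hxle
    obtain ⟨dy, hdy⟩ := Nat.exists_eq_add_of_le hyle
    have hWV : W = V + (dx * b + dy * c) := by
      have e1 := repspec V hV
      have e2 := repspec W hW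
      set a1 := X V with ha1
      set a2 := Y V with ha2
      rw [hdx, hdy] at e2
      rw [e2]
      conv_rhs => rw [e1]
      ring
    rcases Nat.eq_zero_or_pos (dx + dy) with h0 | hpos
    · apply hne
      have hd : dx = 0 ∧ dy = 0 := by omega
      rw [hWV, hd.1, hd.2]; ring
    · exact hmax dx dy hpos (by rw [← hWV]; exact hW)
  have neX : ∀ V W : ℕ, A V → A W → V ≠ W →
      (∀ s t : ℕ, 1 ≤ s + t → ¬ A (V + (s * b + t * c))) →
      (∀ s t : ℕ, 1 ≤ s + t → ¬ A (W + (s * b + t * c))) → X V ≠ X W := by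
    intro V W hV hW hne hmV hmW heq
    have i1 := incomp V W hV hW hne hmV
    have i2 := incomp W V hW hV (Ne.symm hne) hmW
    rw [heq] at i1
    omega
  -- bound on x coordinates of representations
  have xbound : ∀ x y, R x y → x ≤ B := by
    rintro x y ⟨hAv, -, -⟩
    calc x ≤ x * b := Nat.le_mul_of_pos_right x (by omega)
    _ ≤ x * b + y * c := Nat.le_add_right _ _
    _ ≤ B := hA7 _ hAv
  -- the generic inner-corner / class-zero lemma
  have czero : ∀ u v : ℕ, ¬ R (u + 1) (v + 1) → R u (v + 1) → R (u + 1) v →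
      ((u + 1) * b + (v + 1) * c) ≡ 0 [MOD m] := by
    intro u v hnot hRl hRd
    obtain ⟨w, hw, hwc⟩ := hA3 ((u + 1) * b + (v + 1) * c)
    rcases Nat.eq_zero_or_pos (X w) with hX0 | hXpos
    · rcases Nat.eq_zero_or_pos (Y w) with hY0 | hYpos
      · have hw0 : w = 0 := by
          have := repspec w hw
          rw [hX0, hY0] at this
          simpa using this
        rw [← hw0]
        exact hwc.symm
      · -- e₂ direction
        obtain ⟨r₂, hr₂⟩ : ∃ k, Y w = k + 1 := ⟨Y w - 1, by omega⟩
        have hRr : R (X w) r₂ := L1 (X w) (Y w) (X w) r₂ le_rfl (by omega) (RofA w hw)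
        have hcong : ((u + 1) * b + v * c) + c ≡ ((X w) * b + r₂ * c) + c [MOD m] := by
          have e1 : ((u + 1) * b + v * c) + c = (u + 1) * b + (v + 1) * c := by ring
          have e2 : ((X w) * b + r₂ * c) + c = w := by
            have h3 := repspec w hw
            rw [hr₂] at h3
            conv_rhs => rw [h3]
            ring
          rw [e1, e2]
          exact hwc.symm
        have hveq : (u + 1) * b + v * c = (X w) * b + r₂ * c :=
          hA1 _ _ hRd.1 hRr.1 (Nat.ModEq.add_right_cancel' c hcong)
        have hu : u + 1 = X w := by
          have h4 := hRd.2.1; rw [hveq] at h4; rw [← h4, hRr.2.1]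
        have hv : v = r₂ := by
          have h4 := hRd.2.2; rw [hveq] at h4; rw [← h4, hRr.2.2]
        have hfin := RofA w hw
        rw [← hu, hr₂, ← hv] at hfin
        exact absurd hfin hnot
    · -- e₁ direction
      obtain ⟨r₁, hr₁⟩ : ∃ k, X w = k + 1 := ⟨X w - 1, by omega⟩
      have hRr : R r₁ (Y w) := L1 (X w) (Y w) r₁ (Y w) (by omega) le_rfl (RofA w hw)
      have hcong : (u * b + (v + 1) * c) + b ≡ (r₁ * b + (Y w) * c) + b [MOD m] := by
        have e1 : (u * b + (v + 1) * c) + b = (u + 1) * b + (v + 1) * c := by ring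
        have e2 : (r₁ * b + (Y w) * c) + b = w := by
          have h3 := repspec w hw
          rw [hr₁] at h3
          conv_rhs => rw [h3]
          ring
        rw [e1, e2]
        exact hwc.symm
      have hveq : u * b + (v + 1) * c = r₁ * b + (Y w) * c :=
        hA1 _ _ hRl.1 hRr.1 (Nat.ModEq.add_right_cancel' b hcong)
      have hu : u = r₁ := by
        have h4 := hRl.2.1; rw [hveq] at h4; rw [← h4, hRr.2.1]
      have hv : v + 1 = Y w := by
        have h4 := hRl.2.2; rw [hveq] at h4; rw [← h4, hRr.2.2]
      have hfin := RofA w hw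
      rw [hr₁, ← hu, ← hv] at hfin
      exact absurd hfin hnot
  -- inner corner construction between two "consecutive" maximal reps
  have corner : ∀ xlo xhi ylo yhi : ℕ, R xlo yhi → R xhi ylo → xlo < xhi → ylo < yhi →
      (∀ s t : ℕ, 1 ≤ s + t → ¬ A ((xhi * b + ylo * c) + (s * b + t * c))) →
      ∃ u, ((u + 1) * b + (ylo + 1) * c) ≡ 0 [MOD m] ∧ R (u + 1) ylo := by
    intro xlo xhi ylo yhi hRlo hRhi hxlt hylt hmaxhi
    set Q : ℕ → Prop := fun x => R x (ylo + 1) with hQ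
    have hQlo : Q xlo := L1 xlo yhi xlo (ylo + 1) le_rfl (by omega) hRlo
    have hQbound : ∀ x, Q x → x ≤ B := fun x hx => xbound x _ hx
    have hQlt : ∀ x, Q x → x < xhi := by
      intro x hx
      by_contra hge
      push_neg at hge
      have hRc : R xhi (ylo + 1) := L1 x (ylo + 1) xhi (ylo + 1) hge le_rfl hx
      refine hmaxhi 0 1 (by omega) ?_
      rw [show (xhi * b + ylo * c) + (0 * b + 1 * c) = xhi * b + (ylo + 1) * c by ring]
      exact hRc.1
    set u := Nat.findGreatest Q B with hu
    have hQu : Q u := Nat.findGreatest_spec (hQbound _ hQlo) hQlo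
    have hnotQ : ¬ Q (u + 1) := by
      rcases Nat.lt_or_ge B (u + 1) with h | h
      · intro hq; exact absurd (hQbound _ hq) (by omega)
      · exact Nat.findGreatest_is_greatest (by omega) h
    have hult : u + 1 ≤ xhi := hQlt u hQu
    have hRd : R (u + 1) ylo := L1 xhi ylo (u + 1) ylo hult le_rfl hRhi
    exact ⟨u, czero u ylo hnotQ hQu hRd, hRd⟩
  -- main sorted argument
  have main : ∀ U₁ U₂ U₃ : ℕ, A U₁ → A U₂ → A U₃ →
      (∀ s t : ℕ, 1 ≤ s + t → ¬ A (U₁ + (s * b + t * c))) →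
      (∀ s t : ℕ, 1 ≤ s + t → ¬ A (U₂ + (s * b + t * c))) →
      (∀ s t : ℕ, 1 ≤ s + t → ¬ A (U₃ + (s * b + t * c))) →
      X U₂ < X U₁ → X U₃ < X U₂ → False := by
    intro U₁ U₂ U₃ hU1 hU2 hU3 hM1 hM2 hM3 hx12 hx23
    have hne12 : U₁ ≠ U₂ := by intro h; rw [h] at hx12; omega
    have hne23 : U₂ ≠ U₃ := by intro h; rw [h] at hx23; omega
    have hy12 : Y U₁ < Y U₂ := by
      have := incomp U₂ U₁ hU2 hU1 (Ne.symm hne12) hM2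
      omega
    have hy23 : Y U₂ < Y U₃ := by
      have := incomp U₃ U₂ hU3 hU2 (Ne.symm hne23) hM3
      omega
    have hM1' : ∀ s t : ℕ, 1 ≤ s + t → ¬ A ((X U₁ * b + Y U₁ * c) + (s * b + t * c)) := by
      intro s t hst
      rw [← repspec U₁ hU1]
      exact hM1 s t hst
    have hM2' : ∀ s t : ℕ, 1 ≤ s + t → ¬ A ((X U₂ * b + Y U₂ * c) + (s * b + t * c)) := by
      intro s t hst
      rw [← repspec U₂ hU2]
      exact hM2 s t hst
    obtain ⟨u₁, hc₁, hz₁⟩ := corner (X U₂) (X U₁) (Y U₁) (Y U₂)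
      (RofA U₂ hU2) (RofA U₁ hU1) hx12 hy12 hM1'
    obtain ⟨u₂, hc₂, hz₂⟩ := corner (X U₃) (X U₂) (Y U₂) (Y U₃)
      (RofA U₃ hU3) (RofA U₂ hU2) hx23 hy23 hM2'
    -- two congruences to zero
    have hcc : ((u₁ + 1) * b + Y U₁ * c) + c ≡ ((u₂ + 1) * b + Y U₂ * c) + c [MOD m] := by
      have e1 : ((u₁ + 1) * b + Y U₁ * c) + c = (u₁ + 1) * b + (Y U₁ + 1) * c := by ring
      have e2 : ((u₂ + 1) * b + Y U₂ * c) + c = (u₂ + 1) * b + (Y U₂ + 1) * c := by ring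
      rw [e1, e2]
      exact hc₁.trans hc₂.symm
    have hveq : (u₁ + 1) * b + Y U₁ * c = (u₂ + 1) * b + Y U₂ * c :=
      hA1 _ _ hz₁.1 hz₂.1 (Nat.ModEq.add_right_cancel' c hcc)
    have hyy : Y U₁ = Y U₂ := by
      have e1 := hz₁.2.2
      have e2 := hz₂.2.2
      rw [hveq] at e1
      omega
    omega
  -- sort the three maximal elements by X value and conclude
  have n12 := neX W₁ W₂ hW1 hW2 d12 hm1 hm2
  have n13 := neX W₁ W₃ hW1 hW3 d13 hm1 hm3
  have n23 := neX W₂ W₃ hW2 hW3 d23 hm2 hm3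
  rcases Nat.lt_trichotomy (X W₁) (X W₂) with h12 | h12 | h12
  · rcases Nat.lt_trichotomy (X W₂) (X W₃) with h23 | h23 | h23
    · exact main W₃ W₂ W₁ hW3 hW2 hW1 hm3 hm2 hm1 h23 h12
    · exact n23 h23
    · rcases Nat.lt_trichotomy (X W₁) (X W₃) with h13 | h13 | h13
      · exact main W₂ W₃ W₁ hW2 hW3 hW1 hm2 hm3 hm1 h23 h13
      · exact n13 h13
      · exact main W₂ W₁ W₃ hW2 hW1 hW3 hm2 hm1 hm3 h12 h13
  · exact n12 h12
  · rcases Nat.lt_trichotomy (X W₂) (X W₃) with h23 | h23 | h23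
    · rcases Nat.lt_trichotomy (X W₁) (X W₃) with h13 | h13 | h13
      · exact main W₃ W₁ W₂ hW3 hW1 hW2 hm3 hm1 hm2 h13 h12
      · exact n13 h13
      · exact main W₁ W₃ W₂ hW1 hW3 hW2 hm1 hm3 hm2 h13 h23
    · exact n23 h23
    · exact main W₁ W₂ W₃ hW1 hW2 hW3 hm1 hm2 hm3 h12 h23

end NumSgpAux
namespace NumSgpAux
open NumSgp

section Apery

variable {H : Set ℕ}

/-- multiples stay in `H` -/
lemma nat_mul_mem (h0 : 0 ∈ H) (hadd : ∀ a ∈ H, ∀ b ∈ H, a + b ∈ H) {x : ℕ} (hx : x ∈ H) :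
    ∀ k : ℕ, k * x ∈ H := by
  intro k
  induction k with
  | zero => simpa using h0
  | succ k ih => rw [show (k+1)*x = k*x + x by ring]; exact hadd _ ih _ hx

/-- The Apéry predicate of `H` w.r.t. `m`. -/
def Ap (H : Set ℕ) (m : ℕ) (w : ℕ) : Prop := w ∈ H ∧ ¬ memZ H ((w : ℤ) - (m : ℤ))

lemma ap_unique (h0 : 0 ∈ H) (hadd : ∀ a ∈ H, ∀ b ∈ H, a + b ∈ H) {m : ℕ} (hm : m ∈ H)
    (hm1 : 1 ≤ m) {w w' : ℕ} (h : Ap H m w) (h' : Ap H m w') (hc : w ≡ w' [MOD m]) : w = w' := by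
  have key : ∀ u u' : ℕ, Ap H m u → Ap H m u' → u ≡ u' [MOD m] → u ≤ u' → u = u' := by
    intro u u' hu hu' huc hle
    rcases Nat.eq_or_lt_of_le hle with heq | hlt
    · exact heq
    · exfalso
      obtain ⟨k, hk⟩ := (Nat.modEq_iff_dvd' hle).mp huc
      have hk1 : k ≠ 0 := by rintro rfl; simp at hk; omega
      obtain ⟨k', rfl⟩ : ∃ k', k = k' + 1 := ⟨k - 1, by omega⟩
      have hmul : m * (k' + 1) = k' * m + m := by ring
      have hu'eq : u' = u + k' * m + m := by omega
      have hmem : u + k' * m ∈ H := hadd _ hu.1 _ (nat_mul_mem h0 hadd hm k')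
      apply hu'.2
      refine ⟨u + k' * m, hmem, ?_⟩
      rw [hu'eq]
      push_cast
      ring
  rcases le_total w w' with hle | hle
  · exact key w w' h h' hc hle
  · exact (key w' w h' h hc.symm hle).symm

lemma ap_le_mem (h0 : 0 ∈ H) (hadd : ∀ a ∈ H, ∀ b ∈ H, a + b ∈ H) {m : ℕ} (hm : m ∈ H)
    (hm1 : 1 ≤ m) {w h : ℕ} (hw : Ap H m w) (hh : h ∈ H) (hc : h ≡ w [MOD m]) : w ≤ h := by
  by_contra hlt
  push_neg at hlt
  obtain ⟨k, hk⟩ := (Nat.modEq_iff_dvd' hlt.le).mp hc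
  have hk1 : k ≠ 0 := by rintro rfl; simp at hk; omega
  obtain ⟨k', rfl⟩ : ∃ k', k = k' + 1 := ⟨k - 1, by omega⟩
  have hmul : m * (k' + 1) = k' * m + m := by ring
  have hweq : w = h + k' * m + m := by omega
  apply hw.2
  refine ⟨h + k' * m, hadd _ hh _ (nat_mul_mem h0 hadd hm k'), ?_⟩
  rw [hweq]
  push_cast
  ring

lemma ap_exists (h0 : 0 ∈ H) (hadd : ∀ a ∈ H, ∀ b ∈ H, a + b ∈ H) {F₀ m : ℕ}
    (hFmax : ∀ n : ℕ, n ∉ H → n ≤ F₀) (hm : m ∈ H) (hm1 : 1 ≤ m) (v : ℕ) :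
    ∃ w, Ap H m w ∧ w ≡ v [MOD m] := by
  classical
  have hex : ∃ n : ℕ, n ∈ H ∧ n ≡ v [MOD m] := by
    refine ⟨v + (F₀ + 1) * m, big_mem hFmax ?_, ?_⟩
    · nlinarith
    · show (v + (F₀ + 1) * m) % m = v % m
      simp [Nat.add_mul_mod_self_right]
  obtain ⟨hwH, hwc⟩ := Nat.find_spec hex
  refine ⟨Nat.find hex, ⟨hwH, ?_⟩, hwc⟩
  rintro ⟨n, hn, hnz⟩
  have hwm : Nat.find hex = n + m := by omega
  have hnc : n ≡ v [MOD m] := by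
    have h1 : n ≡ n + m [MOD m] := by
      show n % m = (n + m) % m
      simp [Nat.add_mod_right]
    exact (h1.trans (hwm ▸ hwc))
  have := Nat.find_min' hex ⟨hn, hnc⟩
  omega

lemma ap_bound {F₀ m : ℕ} (hFmax : ∀ n : ℕ, n ∉ H → n ≤ F₀) {w : ℕ} (hw : Ap H m w) :
    w ≤ F₀ + m := by
  by_contra hgt
  push_neg at hgt
  exact hw.2 (memZ_of_big hFmax (by push_cast; omega))

lemma ap_of_pf {m p : ℕ} (hm : m ∈ H) (hm0 : m ≠ 0) (hp : p ∉ H)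
    (hpf : ∀ h ∈ H, h ≠ 0 → p + h ∈ H) : Ap H m (p + m) := by
  refine ⟨hpf m hm hm0, ?_⟩
  rintro ⟨n, hn, hnz⟩
  have : n = p := by omega
  rw [this] at hn
  exact hp hn

lemma ap_max_of_pf {m p : ℕ} (hp : p ∉ H) (hpf : ∀ h ∈ H, h ≠ 0 → p + h ∈ H)
    {h' : ℕ} (hh' : h' ∈ H) (hne : h' ≠ 0) : ¬ Ap H m (p + m + h') := by
  rintro ⟨-, hnot⟩
  apply hnot
  refine ⟨p + h', hpf h' hh' hne, by push_cast; ring⟩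

/-- downward closure of Apéry in (b,c)-coordinates -/
lemma ap_down (h0 : 0 ∈ H) (hadd : ∀ a ∈ H, ∀ b ∈ H, a + b ∈ H) {m b c : ℕ}
    (hbH : b ∈ H) (hcH : c ∈ H) :
    ∀ x y x' y' : ℕ, x' ≤ x → y' ≤ y → Ap H m (x * b + y * c) → Ap H m (x' * b + y' * c) := by
  intro x y x' y' hx hy hap
  obtain ⟨dx, rfl⟩ := Nat.exists_eq_add_of_le hx
  obtain ⟨dy, rfl⟩ := Nat.exists_eq_add_of_le hy
  constructor
  · exact hadd _ (nat_mul_mem h0 hadd hbH x') _ (nat_mul_mem h0 hadd hcH y')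
  · rintro ⟨n, hn, hnz⟩
    apply hap.2
    refine ⟨n + dx * b + dy * c, hadd _ (hadd _ hn _ (nat_mul_mem h0 hadd hbH dx)) _
      (nat_mul_mem h0 hadd hcH dy), ?_⟩
    push_cast
    push_cast at hnz
    ring_nf
    ring_nf at hnz
    linarith

/-- if all Apéry elements are multiples of a single c₀, H is 2-generated -/
lemma gen_two_of_ap_single (h0 : 0 ∈ H) (hadd : ∀ a ∈ H, ∀ b ∈ H, a + b ∈ H) {F₀ m c₀ : ℕ}
    (hFmax : ∀ n : ℕ, n ∉ H → n ≤ F₀) (hm : m ∈ H) (hm1 : 1 ≤ m) (hc : c₀ ∈ H)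
    (hap : ∀ w, Ap H m w → ∃ y, w = y * c₀) : H = genBy {m, c₀} := by
  ext h
  constructor
  · intro hh
    obtain ⟨w, hw, hwc⟩ := ap_exists h0 hadd hFmax hm hm1 h
    have hle : w ≤ h := ap_le_mem h0 hadd hm hm1 hw hh hwc.symm
    obtain ⟨k, hk⟩ := (Nat.modEq_iff_dvd' hle).mp hwc
    obtain ⟨y, hy⟩ := hap w hw
    have hmk : m * k = k * m := by ring
    have : h = y * c₀ + k * m := by omega
    rw [this]
    exact add_mem_genBy (mul_mem_genBy (by simp) y) (mul_mem_genBy (by simp) k)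
  · intro hh
    exact genBy_subset h0 hadd (by
      rintro x (rfl | hx)
      · exact hm
      · rw [Set.mem_singleton_iff.mp hx]; exact hc) hh

end Apery

/-- THE TYPE ≤ 2 THEOREM for 3-generated numerical semigroups. -/
lemma pf_le_two {H : Set ℕ} (hnum : IsNumSgp H) {n₁ n₂ n₃ : ℕ} (hgen : H = genBy {n₁, n₂, n₃})
    (hmin : ∀ x y : ℕ, H ≠ genBy {x, y}) {F₀ : ℕ} (hF : F₀ ∉ H)
    (hFmax : ∀ n : ℕ, n ∉ H → n ≤ F₀) {p q r : ℕ}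
    (hpH : p ∉ H) (hppf : ∀ h ∈ H, h ≠ 0 → p + h ∈ H)
    (hqH : q ∉ H) (hqpf : ∀ h ∈ H, h ≠ 0 → q + h ∈ H)
    (hrH : r ∉ H) (hrpf : ∀ h ∈ H, h ≠ 0 → r + h ∈ H)
    (hpq : p ≠ q) (hpr : p ≠ r) (hqr : q ≠ r) : False := by
  classical
  obtain ⟨h0, hadd, hfin⟩ := hnum
  have hMne : ∃ n : ℕ, n ∈ H ∧ n ≠ 0 := ⟨F₀ + 1, big_mem hFmax (by omega), by omega⟩
  set m := Nat.find hMne with hmdef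
  obtain ⟨hmH, hm0⟩ := Nat.find_spec hMne
  have hmmin : ∀ h ∈ H, h ≠ 0 → m ≤ h := fun h hh h0' => Nat.find_min' hMne ⟨hh, h0'⟩
  have hm1 : 1 ≤ m := by omega
  have h1H : n₁ ∈ H := by rw [hgen]; exact mem_genBy_of_mem (by simp)
  have h2H : n₂ ∈ H := by rw [hgen]; exact mem_genBy_of_mem (by simp)
  have h3H : n₃ ∈ H := by rw [hgen]; exact mem_genBy_of_mem (by simp)
  -- a pair (b,c) of elements of H such that every Apéry element is x*b+y*c
  have hbc : ∃ b c : ℕ, b ∈ H ∧ c ∈ H ∧ ∀ w, Ap H m w → ∃ x y, w = x * b + y * c := by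
    have hmG : m ∈ genBy {n₁, n₂, n₃} := by rw [← hgen]; exact hmH
    obtain ⟨a₁, a₂, a₃, hfac⟩ := genBy_three_factor hmG
    -- helper: if nᵢ = m then the other two work
    have helper : ∀ b c : ℕ, b ∈ H → c ∈ H →
        (∀ w ∈ H, ∃ x y z : ℕ, w = x * m + y * b + z * c) →
        ∃ b' c' : ℕ, b' ∈ H ∧ c' ∈ H ∧ ∀ w, Ap H m w → ∃ x y, w = x * b' + y * c' := by
      intro b c hbH hcH hfact
      refine ⟨b, c, hbH, hcH, ?_⟩
      intro w hw
      obtain ⟨x, y, z, hxyz⟩ := hfact w hw.1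
      rcases Nat.eq_zero_or_pos x with hx0 | hxpos
      · subst hx0
        exact ⟨y, z, by omega⟩
      · exfalso
        obtain ⟨x', rfl⟩ : ∃ x', x = x' + 1 := ⟨x - 1, by omega⟩
        apply hw.2
        refine ⟨x' * m + y * b + z * c, hadd _ (hadd _ (nat_mul_mem h0 hadd hmH x') _
          (nat_mul_mem h0 hadd hbH y)) _ (nat_mul_mem h0 hadd hcH z), ?_⟩
        rw [hxyz]
        push_cast
        ring
    -- find which generator is m
    have hcase : n₁ = m ∨ n₂ = m ∨ n₃ = m ∨ (a₁ * n₁ = 0 ∧ a₂ * n₂ = 0 ∧ a₃ * n₃ = 0) := by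
      rcases Nat.eq_zero_or_pos (a₁ * n₁) with hz1 | hp1
      · rcases Nat.eq_zero_or_pos (a₂ * n₂) with hz2 | hp2
        · rcases Nat.eq_zero_or_pos (a₃ * n₃) with hz3 | hp3
          · exact Or.inr (Or.inr (Or.inr ⟨hz1, hz2, hz3⟩))
          · refine Or.inr (Or.inr (Or.inl ?_))
            have hn3 : n₃ ≠ 0 := by intro hz; rw [hz] at hp3; simp at hp3
            have ha3 : 1 ≤ a₃ := by by_contra hz; push_neg at hz; interval_cases a₃ <;> simp at hp3
            have : n₃ ≤ m := by nlinarith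
            have := hmmin n₃ h3H hn3
            omega
        · refine Or.inr (Or.inl ?_)
          have hn2 : n₂ ≠ 0 := by intro hz; rw [hz] at hp2; simp at hp2
          have ha2 : 1 ≤ a₂ := by by_contra hz; push_neg at hz; interval_cases a₂ <;> simp at hp2
          have : n₂ ≤ m := by nlinarith
          have := hmmin n₂ h2H hn2
          omega
      · refine Or.inl ?_
        have hn1 : n₁ ≠ 0 := by intro hz; rw [hz] at hp1; simp at hp1
        have ha1 : 1 ≤ a₁ := by by_contra hz; push_neg at hz; interval_cases a₁ <;> simp at hp1
        have : n₁ ≤ m := by nlinarith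
        have := hmmin n₁ h1H hn1
        omega
    rcases hcase with rfl | h | h | ⟨hz1, hz2, hz3⟩
    · refine helper n₂ n₃ h2H h3H ?_
      intro w hw
      obtain ⟨x, y, z, hxyz⟩ := genBy_three_factor (hgen ▸ hw)
      exact ⟨x, y, z, by omega⟩
    · refine helper n₁ n₃ h1H h3H ?_
      intro w hw
      obtain ⟨x, y, z, hxyz⟩ := genBy_three_factor (hgen ▸ hw)
      exact ⟨y, x, z, by rw [hxyz, h]; ring⟩
    · refine helper n₁ n₂ h1H h2H ?_
      intro w hw
      obtain ⟨x, y, z, hxyz⟩ := genBy_three_factor (hgen ▸ hw)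
      exact ⟨z, x, y, by rw [hxyz, h]; ring⟩
    · exfalso
      omega
  obtain ⟨b, c, hbH, hcH, hfacAp⟩ := hbc
  -- degenerate cases
  rcases Nat.eq_zero_or_pos b with hb0 | hb1
  · subst hb0
    apply hmin m c
    refine gen_two_of_ap_single h0 hadd hFmax hmH hm1 hcH ?_
    intro w hw
    obtain ⟨x, y, hxy⟩ := hfacAp w hw
    exact ⟨y, by omega⟩
  rcases Nat.eq_zero_or_pos c with hc0 | hc1
  · subst hc0
    apply hmin m b
    refine gen_two_of_ap_single h0 hadd hFmax hmH hm1 hbH ?_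
    intro w hw
    obtain ⟨x, y, hxy⟩ := hfacAp w hw
    exact ⟨x, by omega⟩
  -- main case: apply the core lemma
  have hsum_mem : ∀ s t : ℕ, s * b + t * c ∈ H :=
    fun s t => hadd _ (nat_mul_mem h0 hadd hbH s) _ (nat_mul_mem h0 hadd hcH t)
  have hsum_ne : ∀ s t : ℕ, 1 ≤ s + t → s * b + t * c ≠ 0 := by
    intro s t hst hz
    rcases Nat.eq_zero_or_pos s with hs | hs
    · have ht : 1 ≤ t := by omega
      nlinarith
    · nlinarith
  refine core_three m b c (F₀ + m) hb1 hc1 (Ap H m)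
    (fun v w hv hw hc' => ap_unique h0 hadd hmH hm1 hv hw hc')
    (ap_down h0 hadd hbH hcH)
    (ap_exists h0 hadd hFmax hmH hm1)
    hfacAp
    (fun v hv => ap_bound hFmax hv)
    (p + m) (q + m) (r + m)
    (ap_of_pf hmH hm0 hpH hppf) (ap_of_pf hmH hm0 hqH hqpf) (ap_of_pf hmH hm0 hrH hrpf)
    (fun s t hst => ap_max_of_pf hpH hppf (hsum_mem s t) (hsum_ne s t hst))
    (fun s t hst => ap_max_of_pf hqH hqpf (hsum_mem s t) (hsum_ne s t hst))
    (fun s t hst => ap_max_of_pf hrH hrpf (hsum_mem s t) (hsum_ne s t hst))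
    (by omega) (by omega) (by omega)

end NumSgpAux
namespace NumSgpAux
open NumSgp

/-- upward closure within a residue class -/
lemma mem_upward {H : Set ℕ} (h0 : 0 ∈ H) (hadd : ∀ a ∈ H, ∀ b ∈ H, a + b ∈ H) {m : ℕ}
    (hm : m ∈ H) {h x : ℕ} (hh : h ∈ H) (hle : h ≤ x) (hc : x ≡ h [MOD m]) : x ∈ H := by
  obtain ⟨k, hk⟩ := (Nat.modEq_iff_dvd' hle).mp hc.symm
  have hmk : m * k = k * m := by ring
  have hx : x = h + k * m := by omega
  rw [hx]
  exact hadd _ hh _ (nat_mul_mem h0 hadd hm k)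

/-- natural-number version of the pseudo-Frobenius property -/
lemma pf_nat' {H : Set ℕ} {p : ℕ} (hp : (p : ℤ) ∈ pseudoFrob H) :
    p ∉ H ∧ ∀ h ∈ H, h ≠ 0 → p + h ∈ H := by
  obtain ⟨hp1, hp2⟩ := hp
  constructor
  · intro hmem; exact hp1 (memZ_natCast.mpr hmem)
  · intro h hh hh0
    have := hp2 h hh hh0
    rw [show ((p : ℤ) + (h : ℤ)) = ((p + h : ℕ) : ℤ) by push_cast; ring, memZ_natCast] at this
    exact this

/-- THE FORWARD DIRECTION. -/
lemma forward {H : Set ℕ} (hnum : IsNumSgp H)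
    (hgen : ∃ n₁ n₂ n₃ : ℕ, H = genBy {n₁, n₂, n₃})
    (hmin : ∀ x y : ℕ, H ≠ genBy {x, y})
    (hns : ¬ IsSymmetric H) (htr : trace H = condIdeal H) :
    ∃ a : ℕ, 0 < a ∧ H = genBy {3, 3 * a + 1, 3 * a + 2} := by
  classical
  obtain ⟨n₁, n₂, n₃, hgen⟩ := hgen
  obtain ⟨h0, hadd, hfin⟩ := id hnum
  obtain ⟨F₀, hF, hFmax, hfr⟩ := frob_setup hnum (compl_nonempty hmin)
  have hF1 : 1 ≤ F₀ := by
    rcases Nat.eq_zero_or_pos F₀ with h | h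
    · exfalso; apply hF; rw [h]; exact h0
    · exact h
  obtain ⟨f₀, hfPF, hfltF, hfH, hf1⟩ := exists_other_pf hnum hF hFmax hfr hns
  have hfpf : ∀ h ∈ H, h ≠ 0 → f₀ + h ∈ H := (pf_nat' hfPF).2
  have hFpf : ∀ h ∈ H, h ≠ 0 → F₀ + h ∈ H := by
    intro h hh hh0
    exact big_mem hFmax (by omega)
  -- pseudo-Frobenius numbers are exactly f₀ and F₀
  have hPFsub : ∀ g ∈ pseudoFrob H, g = (f₀ : ℤ) ∨ g = (F₀ : ℤ) := by
    intro g hg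
    by_contra hcon
    push_neg at hcon
    obtain ⟨g₀, rfl, hg₀H, hg₀1, hg₀F, hg₀pf⟩ := pf_nat hnum hF hFmax hg
    have hgf : g₀ ≠ f₀ := by intro h; apply hcon.1; rw [h]
    have hgF : g₀ ≠ F₀ := by intro h; apply hcon.2; rw [h]
    exact pf_le_two hnum hgen hmin hF hFmax hg₀H hg₀pf hfH hfpf hF hFpf
      hgf hgF (by omega)
  -- the criterion Q
  obtain ⟨d, hddef⟩ : ∃ d : ℕ, d = F₀ - f₀ := ⟨_, rfl⟩
  have hd1 : 1 ≤ d := by omega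
  have Q : ∀ s : ℕ, s ∈ H → s ≤ F₀ → s + d ∉ H := by
    intro s hs hsF hcon2
    have hmem : (s : ℤ) ∈ trace H := by
      apply mem_trace_of hnum hF hFmax
      intro g hg
      rcases hPFsub g hg with rfl | rfl
      · have he : (s : ℤ) + (F₀ : ℤ) - (f₀ : ℤ) = ((s + d : ℕ) : ℤ) := by
          rw [hddef]
          push_cast [Nat.cast_sub hfltF.le]
          ring
        rw [he, memZ_natCast]
        exact hcon2
      · have he : (s : ℤ) + (F₀ : ℤ) - (F₀ : ℤ) = ((s : ℕ) : ℤ) := by push_cast; ring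
        rw [he, memZ_natCast]
        exact hs
    rw [htr] at hmem
    have : frob H < (s : ℤ) := hmem
    rw [hfr] at this
    omega
  -- multiplicity
  have hMne : ∃ n : ℕ, n ∈ H ∧ n ≠ 0 := ⟨F₀ + 1, big_mem hFmax (by omega), by omega⟩
  obtain ⟨m, hmH, hm0, hmmin⟩ : ∃ m : ℕ, m ∈ H ∧ m ≠ 0 ∧ ∀ h ∈ H, h ≠ 0 → m ≤ h := by
    obtain ⟨hm1', hm2'⟩ := Nat.find_spec hMne
    exact ⟨Nat.find hMne, hm1', hm2', fun h hh h0' => Nat.find_min' hMne ⟨hh, h0'⟩⟩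
  have hm1 : 1 ≤ m := by omega
  have h1H : (1 : ℕ) ∉ H := by
    intro h1
    apply hF
    have := nat_mul_mem h0 hadd h1 F₀
    simpa using this
  have hm2 : 2 ≤ m := by
    rcases Nat.lt_or_ge m 2 with h | h
    · exfalso
      have hmeq : m = 1 := by omega
      rw [hmeq] at hmH
      exact h1H hmH
    · exact h
  -- d < m
  have hdm : d < m := by
    by_contra hge
    push_neg at hge
    have hVH : f₀ + m ∈ H := hfpf m hmH hm0
    have hVF : f₀ + m ≤ F₀ := by omega
    exact Q _ hVH hVF (big_mem hFmax (by omega))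
  -- V and W
  obtain ⟨V, hVdef⟩ : ∃ V : ℕ, V = f₀ + m := ⟨_, rfl⟩
  obtain ⟨W, hWdef⟩ : ∃ W : ℕ, W = F₀ + m := ⟨_, rfl⟩
  have hapV : Ap H m V := by rw [hVdef]; exact ap_of_pf hmH hm0 hfH hfpf
  have hapW : Ap H m W := by rw [hWdef]; exact ap_of_pf hmH hm0 hF hFpf
  have hap0 : Ap H m 0 := by
    refine ⟨h0, ?_⟩
    intro hmem
    have := memZ_nonneg hmem
    omega
  -- Lemma U
  have hU : ∀ w, Ap H m w → F₀ < w → w = V ∨ w = W := by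
    intro w hw hFw
    have hwm : m ≤ w := hmmin w hw.1 (by omega)
    obtain ⟨g, hgdef⟩ : ∃ g : ℕ, g = w - m := ⟨_, rfl⟩
    have hgH : g ∉ H := by
      intro hmem
      exact hw.2 ⟨g, hmem, by push_cast; omega⟩
    have hgpf : ∀ h ∈ H, h ≠ 0 → g + h ∈ H := by
      intro h hh hh0
      have hhm : m ≤ h := hmmin h hh hh0
      exact big_mem hFmax (by omega)
    have hgPF : ((g : ℕ) : ℤ) ∈ pseudoFrob H := by
      constructor
      · rw [memZ_natCast]; exact hgH
      · intro h hh hh0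
        rw [show ((g : ℕ) : ℤ) + (h : ℤ) = ((g + h : ℕ) : ℤ) by push_cast; ring, memZ_natCast]
        exact hgpf h hh hh0
    rcases hPFsub _ hgPF with h | h
    · left; have : g = f₀ := by exact_mod_cast h
      omega
    · right; have : g = F₀ := by exact_mod_cast h
      omega
  -- Lemma S : every Apéry element ≤ F₀ has V ≡ w + d
  have hS : ∀ w, Ap H m w → w ≤ F₀ → V ≡ w + d [MOD m] := by
    intro w hw hwF
    -- largest class element below F₀
    obtain ⟨q, hqdef⟩ : ∃ q : ℕ, q = (F₀ - w) / m := ⟨_, rfl⟩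
    obtain ⟨s, hsdef⟩ : ∃ s : ℕ, s = w + m * q := ⟨_, rfl⟩
    have hdm' : m * q + (F₀ - w) % m = F₀ - w := by rw [hqdef]; exact Nat.div_add_mod _ _
    have hmod : (F₀ - w) % m < m := Nat.mod_lt _ (show 0 < m by omega)
    have hsF : s ≤ F₀ := by omega
    have hsm : F₀ < s + m := by omega
    have hsH : s ∈ H := by
      rw [hsdef, show m * q = q * m by ring]
      exact hadd _ hw.1 _ (nat_mul_mem h0 hadd hmH q)
    have hsc : s ≡ w [MOD m] := by
      show s % m = w % m
      rw [hsdef, show w + m * q = w + q * m by ring]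
      simp [Nat.add_mul_mod_self_right]
    have hsd : s + d ∉ H := Q s hsH hsF
    -- the Apéry element w' of the class of w + d
    obtain ⟨w', hw', hw'c⟩ := ap_exists h0 hadd hFmax hmH hm1 (w + d)
    have hw'big : s + d < w' := by
      by_contra hle
      push_neg at hle
      apply hsd
      refine mem_upward h0 hadd hmH hw'.1 hle ?_
      calc s + d ≡ w + d [MOD m] := hsc.add_right d
      _ ≡ w' [MOD m] := hw'c.symm
    have hw'F : F₀ < w' := by
      have hcc : (s + d) ≡ w' [MOD m] := (hsc.add_right d).trans hw'c.symm
      obtain ⟨k, hk⟩ := (Nat.modEq_iff_dvd' hw'big.le).mp hcc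
      have hk1 : k ≠ 0 := by rintro rfl; simp at hk; omega
      obtain ⟨k', rfl⟩ : ∃ k', k = k' + 1 := ⟨k - 1, by omega⟩
      have hmul : m * (k' + 1) = m * k' + m := by ring
      omega
    rcases hU w' hw' hw'F with h' | h'
    · rw [← h']; exact hw'c
    · -- w' = W : then V ≡ w, contradiction with uniqueness
      exfalso
      have hVc : V + d ≡ w + d [MOD m] := by
        have hVdW : V + d = W := by omega
        rw [hVdW, ← h']; exact hw'c
      have hVw : V ≡ w [MOD m] := Nat.ModEq.add_right_cancel' d hVc
      have := ap_unique h0 hadd hmH hm1 hapV hw hVw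
      omega
  -- all Apéry elements ≤ F₀ are 0
  have hzero : ∀ w, Ap H m w → w ≤ F₀ → w = 0 := by
    intro w hw hwF
    have h1 := hS w hw hwF
    have h2 := hS 0 hap0 (by omega)
    have : w + d ≡ 0 + d [MOD m] := by
      have := h1.symm.trans h2
      simpa using this
    have hw0 : w ≡ 0 [MOD m] := Nat.ModEq.add_right_cancel' d this
    exact ap_unique h0 hadd hmH hm1 hw hap0 hw0
  have hVW : ∀ w, Ap H m w → w = 0 ∨ w = V ∨ w = W := by
    intro w hw
    rcases Nat.lt_or_ge F₀ w with h | h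
    · rcases hU w hw h with h' | h'
      · exact Or.inr (Or.inl h')
      · exact Or.inr (Or.inr h')
    · exact Or.inl (hzero w hw h)
  -- small class helper
  have hclass : ∀ i j : ℕ, i < m → j < m → i ≡ j [MOD m] → i = j := by
    intro i j hi hj hij
    have : i % m = j % m := hij
    rw [Nat.mod_eq_of_lt hi, Nat.mod_eq_of_lt hj] at this
    exact this
  -- V and W are not ≡ 0
  have hVne0 : ¬ (V ≡ 0 [MOD m]) := by
    intro h
    have := ap_unique h0 hadd hmH hm1 hapV hap0 h
    omega
  have hWne0 : ¬ (W ≡ 0 [MOD m]) := by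
    intro h
    have := ap_unique h0 hadd hmH hm1 hapW hap0 h
    omega
  have hVWne : V ≠ W := by omega
  -- m = 3
  have hm3 : m = 3 := by
    rcases Nat.lt_or_ge m 4 with h4 | h4
    · -- m ∈ {2, 3}; exclude 2
      have : m ≠ 2 := by
        intro h2
        -- V, W both odd, so V ≡ W and V = W
        apply hVWne
        refine ap_unique h0 hadd hmH hm1 hapV hapW ?_
        have hv := hVne0
        have hw := hWne0
        show V % m = W % m
        rw [h2] at hv hw ⊢
        simp only [Nat.ModEq] at hv hw
        omega
      omega
    · -- m ≥ 4 : classes 1 2 3 need Apéry elements among {V, W}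
      exfalso
      obtain ⟨w₁, hw₁, hc₁⟩ := ap_exists h0 hadd hFmax hmH hm1 1
      obtain ⟨w₂, hw₂, hc₂⟩ := ap_exists h0 hadd hFmax hmH hm1 2
      obtain ⟨w₃, hw₃, hc₃⟩ := ap_exists h0 hadd hFmax hmH hm1 3
      have hne : ∀ (w : ℕ) (i : ℕ), 1 ≤ i → i < m → Ap H m w → w ≡ i [MOD m] → w = V ∨ w = W := by
        intro w i hi1 him hw hwc
        rcases hVW w hw with rfl | h | h
        · exfalso
          have : (0 : ℕ) % m = i % m := hwc
          rw [Nat.mod_eq_of_lt (by omega), Nat.mod_eq_of_lt him] at this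
          omega
        · exact Or.inl h
        · exact Or.inr h
      have key : ∀ w w' i j : ℕ, i < m → j < m → Ap H m w → Ap H m w' → w ≡ i [MOD m] →
          w' ≡ j [MOD m] → w = w' → i = j := by
        intro w w' i j hi hj hw hw' hwc hw'c heq
        apply hclass i j hi hj
        calc i ≡ w [MOD m] := hwc.symm
        _ ≡ w' [MOD m] := by rw [heq]
        _ ≡ j [MOD m] := hw'c
      rcases hne w₁ 1 (by omega) (by omega) hw₁ hc₁ with h1 | h1 <;>
        rcases hne w₂ 2 (by omega) (by omega) hw₂ hc₂ with h2 | h2 <;>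
          rcases hne w₃ 3 (by omega) (by omega) hw₃ hc₃ with h3 | h3
      · exact absurd (key w₁ w₂ 1 2 (by omega) (by omega) hw₁ hw₂ hc₁ hc₂ (by omega)) (by omega)
      · exact absurd (key w₁ w₂ 1 2 (by omega) (by omega) hw₁ hw₂ hc₁ hc₂ (by omega)) (by omega)
      · exact absurd (key w₁ w₃ 1 3 (by omega) (by omega) hw₁ hw₃ hc₁ hc₃ (by omega)) (by omega)
      · exact absurd (key w₂ w₃ 2 3 (by omega) (by omega) hw₂ hw₃ hc₂ hc₃ (by omega)) (by omega)
      · exact absurd (key w₂ w₃ 2 3 (by omega) (by omega) hw₂ hw₃ hc₂ hc₃ (by omega)) (by omega)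
      · exact absurd (key w₁ w₃ 1 3 (by omega) (by omega) hw₁ hw₃ hc₁ hc₃ (by omega)) (by omega)
      · exact absurd (key w₁ w₂ 1 2 (by omega) (by omega) hw₁ hw₂ hc₁ hc₂ (by omega)) (by omega)
      · exact absurd (key w₁ w₂ 1 2 (by omega) (by omega) hw₁ hw₂ hc₁ hc₂ (by omega)) (by omega)
  -- now m = 3, d ∈ {1, 2}
  have h3H : (3 : ℕ) ∈ H := by rw [← hm3]; exact hmH
  have hVd : V ≡ d [MOD m] := by
    have := hS 0 hap0 (by omega)
    simpa using this
  have hd2 : d < 3 := by omega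
  -- exclude d = 2
  have hd1' : d = 1 := by
    by_contra hne1
    have hd2' : d = 2 := by omega
    -- witness s = W - 4
    have hVmod : V % 3 = 2 := by
      have : V % m = d % m := hVd
      rw [hm3, hd2'] at this
      simpa using this
    have hWV : W = V + 2 := by omega
    obtain ⟨s, hsdef⟩ : ∃ s : ℕ, s = W - 4 := ⟨_, rfl⟩
    have hs3 : 3 ∣ s := by omega
    have hsH : s ∈ H := by
      obtain ⟨k, hk⟩ := hs3
      rw [hk, show 3 * k = k * 3 by ring]
      exact nat_mul_mem h0 hadd h3H k
    have hsF : s ≤ F₀ := by omega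
    have := Q s hsH hsF
    apply this
    have : s + d = V := by omega
    rw [this]
    exact hapV.1
  -- d = 1 : conclude
  have hVmod : V % 3 = 1 := by
    have : V % m = d % m := hVd
    rw [hm3, hd1'] at this
    simpa using this
  obtain ⟨a, hadef⟩ : ∃ a : ℕ, a = (V - 1) / 3 := ⟨_, rfl⟩
  have hVa : V = 3 * a + 1 := by omega
  have ha1 : 0 < a := by omega
  have hWa : W = 3 * a + 2 := by omega
  refine ⟨a, ha1, ?_⟩
  ext h
  constructor
  · intro hh
    rcases (show h % 3 = 0 ∨ h % 3 = 1 ∨ h % 3 = 2 by omega) with hr | hr | hr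
    · -- multiple of 3
      have h3 : 3 ∣ h := by omega
      obtain ⟨k, hk⟩ := h3
      rw [hk]
      have := mul_mem_genBy (A := {3, 3*a+1, 3*a+2}) (n := 3) (by simp) k
      rw [show k * 3 = 3 * k by ring] at this
      exact this
    · -- class of V
      have hcV : h ≡ V [MOD m] := by
        show h % m = V % m
        rw [hm3]
        omega
      have hle : V ≤ h := ap_le_mem h0 hadd hmH hm1 hapV hh hcV
      obtain ⟨k, hk⟩ := (Nat.modEq_iff_dvd' hle).mp hcV.symm
      rw [hm3] at hk
      have : h = V + k * 3 := by omega
      rw [this, hVa]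
      refine add_mem_genBy ?_ ?_
      · have := mul_mem_genBy (A := {3, 3*a+1, 3*a+2}) (show 3*a+1 ∈ _ by simp) 1
        simpa using this
      · exact mul_mem_genBy (n := 3) (by simp) k
    · -- class of W
      have hcW : h ≡ W [MOD m] := by
        show h % m = W % m
        rw [hm3]
        omega
      have hle : W ≤ h := ap_le_mem h0 hadd hmH hm1 hapW hh hcW
      obtain ⟨k, hk⟩ := (Nat.modEq_iff_dvd' hle).mp hcW.symm
      rw [hm3] at hk
      have : h = W + k * 3 := by omega
      rw [this, hWa]
      refine add_mem_genBy ?_ ?_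
      · have := mul_mem_genBy (A := {3, 3*a+1, 3*a+2}) (show 3*a+2 ∈ _ by simp) 1
        simpa using this
      · exact mul_mem_genBy (n := 3) (by simp) k
  · intro hh
    refine genBy_subset h0 hadd ?_ hh
    rintro x (rfl | rfl | hx)
    · exact h3H
    · rw [← hVa]; exact hapV.1
    · rw [Set.mem_singleton_iff.mp hx, ← hWa]; exact hapW.1

end NumSgpAux
namespace NumSgpAux
open NumSgp

lemma frob_eq {H : Set ℕ} {F₀ : ℕ} (hF : F₀ ∉ H) (hFmax : ∀ n : ℕ, n ∉ H → n ≤ F₀) :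
    frob H = (F₀ : ℤ) := by
  have : IsGreatest {z : ℤ | ¬ memZ H z} (F₀ : ℤ) := by
    constructor
    · simpa [Set.mem_setOf_eq, memZ_natCast] using hF
    · intro z hz
      simp only [Set.mem_setOf_eq] at hz
      rcases le_or_gt z 0 with h | h
      · exact le_trans h (Int.natCast_nonneg F₀)
      · have hz' : z.toNat ∉ H := by
          intro hmem
          exact hz ⟨z.toNat, hmem, Int.toNat_of_nonneg h.le⟩
        have := hFmax _ hz'
        omega
  exact this.csSup_eq

lemma pf_le_frob {H : Set ℕ} {F₀ : ℕ} (hFmax : ∀ n : ℕ, n ∉ H → n ≤ F₀) {g : ℤ}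
    (hg : g ∈ pseudoFrob H) : g ≤ (F₀ : ℤ) := by
  by_contra hgt
  push_neg at hgt
  exact hg.1 (memZ_of_big hFmax hgt)

/-- THE BACKWARD DIRECTION. -/
lemma backward {H : Set ℕ} (a : ℕ) (ha : 0 < a) (hH : H = genBy {3, 3 * a + 1, 3 * a + 2}) :
    trace H = condIdeal H := by
  -- characterization of membership
  have hchar : ∀ n : ℕ, n ∈ H ↔ (3 ∣ n ∨ 3 * a + 1 ≤ n) := by
    intro n
    constructor
    · intro hn
      rw [hH] at hn
      induction hn using AddSubmonoid.closure_induction with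
      | mem y hy =>
        rcases hy with rfl | rfl | hy
        · exact Or.inl ⟨1, by ring⟩
        · exact Or.inr le_rfl
        · rw [Set.mem_singleton_iff.mp hy]; exact Or.inr (by omega)
      | zero => exact Or.inl ⟨0, by ring⟩
      | add x y _ _ hx hy =>
        rcases hx with hx | hx
        · rcases hy with hy | hy
          · exact Or.inl (Nat.dvd_add hx hy)
          · exact Or.inr (by omega)
        · exact Or.inr (by omega)
    · intro hn
      rw [hH]
      rcases hn with ⟨k, rfl⟩ | hn
      · rw [show 3 * k = k * 3 by ring]
        exact mul_mem_genBy (n := 3) (by simp) k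
      · rcases (show n % 3 = 0 ∨ n % 3 = 1 ∨ n % 3 = 2 by omega) with hr | hr | hr
        · obtain ⟨k, rfl⟩ : ∃ k, n = 3 * k := ⟨n / 3, by omega⟩
          rw [show 3 * k = k * 3 by ring]
          exact mul_mem_genBy (n := 3) (by simp) k
        · obtain ⟨k, hk⟩ : ∃ k, n = (3 * a + 1) + k * 3 := ⟨(n - (3*a+1)) / 3, by omega⟩
          rw [hk]
          exact add_mem_genBy (mem_genBy_of_mem (by simp)) (mul_mem_genBy (n := 3) (by simp) k)
        · obtain ⟨k, hk⟩ : ∃ k, n = (3 * a + 2) + k * 3 := ⟨(n - (3*a+2)) / 3, by omega⟩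
          rw [hk]
          exact add_mem_genBy (mem_genBy_of_mem (by simp)) (mul_mem_genBy (n := 3) (by simp) k)
  have h0 : (0 : ℕ) ∈ H := (hchar 0).mpr (Or.inl ⟨0, rfl⟩)
  have hadd : ∀ x ∈ H, ∀ y ∈ H, x + y ∈ H := by
    intro x hx y hy
    rw [hchar] at hx hy ⊢
    rcases hx with hx | hx
    · rcases hy with hy | hy
      · exact Or.inl (Nat.dvd_add hx hy)
      · exact Or.inr (by omega)
    · exact Or.inr (by omega)
  have hnum : IsNumSgp H := by
    refine ⟨h0, hadd, Set.Finite.subset (Set.finite_lt_nat (3 * a + 1)) ?_⟩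
    intro n hn
    simp only [Set.mem_compl_iff] at hn
    simp only [Set.mem_setOf_eq]
    by_contra hge
    push_neg at hge
    exact hn ((hchar n).mpr (Or.inr (by omega)))
  -- Frobenius number
  have hF : (3 * a - 1 : ℕ) ∉ H := by
    rw [hchar]
    push_neg
    omega
  have hFmax : ∀ n : ℕ, n ∉ H → n ≤ 3 * a - 1 := by
    intro n hn
    by_contra hgt
    push_neg at hgt
    apply hn
    rw [hchar]
    omega
  have hfr : frob H = ((3 * a - 1 : ℕ) : ℤ) := frob_eq hF hFmax
  -- small pseudo-Frobenius number 3a-2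
  have hge3 : ∀ h ∈ H, h ≠ 0 → 3 ≤ h := by
    intro h hh h0'
    rw [hchar] at hh
    omega
  have hfPF : ((3 * a - 2 : ℕ) : ℤ) ∈ pseudoFrob H := by
    constructor
    · rw [memZ_natCast, hchar]
      push_neg
      omega
    · intro h' hh' hh0
      have h3 := hge3 h' hh' hh0
      rw [show ((3*a-2 : ℕ) : ℤ) + (h' : ℤ) = ((3*a-2+h' : ℕ) : ℤ) by push_cast; ring,
        memZ_natCast, hchar]
      omega
  have hFPF : ((3 * a - 1 : ℕ) : ℤ) ∈ pseudoFrob H := frob_mem_pf hF hFmax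
  -- conclude
  ext z
  simp only [condIdeal, Set.mem_setOf_eq, hfr]
  constructor
  · rintro ⟨w, ⟨g, hgPF, h, hh, rfl⟩, x, hx, rfl⟩
    -- extract the two memberships from the anti-canonical ideal
    have hx1 : memZ H (x + (-(((3*a-1 : ℕ)) : ℤ) + ((0:ℕ) : ℤ))) :=
      hx _ ⟨_, hFPF, 0, h0, rfl⟩
    have hx2 : memZ H (x + (-(((3*a-2 : ℕ)) : ℤ) + ((0:ℕ) : ℤ))) :=
      hx _ ⟨_, hfPF, 0, h0, rfl⟩
    obtain ⟨n₁, hn₁, hn₁z⟩ := hx1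
    obtain ⟨n₂, hn₂, hn₂z⟩ := hx2
    have hn21 : n₂ = n₁ + 1 := by push_cast at hn₁z hn₂z; omega
    -- two consecutive elements of H force n₁ ≥ 3a
    have hn₁ge : 3 * a ≤ n₁ := by
      rw [hchar] at hn₁ hn₂
      omega
    have hgle : g ≤ ((3*a-1 : ℕ) : ℤ) := pf_le_frob hFmax hgPF
    have hx3a : ((6 * a - 1 : ℕ) : ℤ) ≤ x := by push_cast at hn₁z ⊢; omega
    have hhge : (0 : ℤ) ≤ (h : ℤ) := Int.natCast_nonneg h
    push_cast at hgle hx3a ⊢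
    omega
  · intro hz
    apply mem_trace_of hnum hF hFmax
    intro g hg
    have hgle := pf_le_frob hFmax hg
    exact memZ_of_big hFmax (by omega)

end NumSgpAux


open NumSgp

/-- for a non-symmetric 3-generated numerical semigroup,
`tr(H) = C_H` iff `H = ⟨3, 3a+1, 3a+2⟩` for some positive integer `a`. -/
theorem stmt_12 (H : Set ℕ) (hnum : IsNumSgp H)
    (hgen : ∃ n₁ n₂ n₃ : ℕ, H = genBy {n₁, n₂, n₃})
    (hmin : ∀ x y : ℕ, H ≠ genBy {x, y})
    (hns : ¬ IsSymmetric H) :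
    trace H = condIdeal H ↔
      ∃ a : ℕ, 0 < a ∧ H = genBy {3, 3 * a + 1, 3 * a + 2} := by
  constructor
  · intro htr
    exact NumSgpAux.forward hnum hgen hmin hns htr
  · rintro ⟨a, ha, hH⟩
    exact NumSgpAux.backward a ha hH
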